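/- Let H be a real Hilbert space and A: H → 2^H a paramonotone operator. Then A is strictly monotone if and only if A is disjointly injective, i.e., A(x) ∩ A(y) = ∅ whenever x ≠ y. -/
import Mathlib


open scoped InnerProductSpace

variable {H : Type*} [NormedAddCommGroup H] [InnerProductSpace ℝ H] [CompleteSpace H]

/-- A set-valued operator `A : H → 2^H` is monotone. -/
def MonotoneOp (A : H → Set H) : Prop :=
  ∀ x₀ x₁ v₀ v₁ : H, v₀ ∈ A x₀ → v₁ ∈ A x₁ → 0 ≤ ⟪v₀ - v₁, x₀ - x₁⟫_ℝ

/-- A set-valued operator is strictly monotone. -/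
def StrictlyMonotoneOp (A : H → Set H) : Prop :=
  ∀ x₀ x₁ v₀ v₁ : H, v₀ ∈ A x₀ → v₁ ∈ A x₁ → x₀ ≠ x₁ → 0 < ⟪v₀ - v₁, x₀ - x₁⟫_ℝ

/-- A monotone operator is paramonotone. -/
def Paramonotone (A : H → Set H) : Prop :=
  MonotoneOp A ∧
  ∀ x₀ x₁ v₀ v₁ : H, v₀ ∈ A x₀ → v₁ ∈ A x₁ → ⟪x₀ - x₁, v₀ - v₁⟫_ℝ = 0 →
    v₀ ∈ A x₁ ∧ v₁ ∈ A x₀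

/-- A monotone operator is maximally monotone. -/
def MaximallyMonotoneOp (A : H → Set H) : Prop :=
  MonotoneOp A ∧
  ∀ x v : H, (∀ y w : H, w ∈ A y → 0 ≤ ⟪v - w, x - y⟫_ℝ) → v ∈ A x

theorem stmt17 (A : H → Set H) (hpara : Paramonotone A) :
    StrictlyMonotoneOp A ↔ ∀ x y : H, x ≠ y → A x ∩ A y = ∅ := by
  constructor
  · intro hs x y hxy
    ext v
    simp only [Set.mem_inter_iff, Set.mem_empty_iff_false, iff_false]
    rintro ⟨hvx, hvy⟩
    have := hs x y v v hvx hvy hxy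
    simp at this
  · intro hdisj x₀ x₁ v₀ v₁ h₀ h₁ hne
    rcases lt_or_eq_of_le (hpara.1 x₀ x₁ v₀ v₁ h₀ h₁) with h | h
    · exact h
    · exfalso
      have h' : ⟪x₀ - x₁, v₀ - v₁⟫_ℝ = 0 := by
        rw [real_inner_comm]; exact h.symm
      have hmem := (hpara.2 x₀ x₁ v₀ v₁ h₀ h₁ h').1
      have := hdisj x₀ x₁ hne
      exact absurd (Set.mem_inter h₀ hmem) (by rw [this]; exact Set.notMem_empty v₀)
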